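/- Let α > −1/2 be real and let P^{(∞)}_α(z) = [[1,0],[2αi,1]] · diag((z+1)^{−1/4}, (z+1)^{1/4}) · V · diag(w(z)^{−α}, w(z)^{α}) on ℂ∖(−∞,0], with w(z) = ((z+1)^{1/2}+1)/((z+1)^{1/2}−1), V = (1/√2)[[1,i],[i,1]], and principal branches of all powers. Then P^{(∞)}_α(z) · V^{−1} · diag(z^{1/4}, z^{−1/4}) → I (the 2×2 identity matrix) as |z| → ∞ with z ∉ (−∞,0], where z^{±1/4} are principal branches. -/

import Mathlib

open Complex Matrix Filter Topology

/-- `V = (1/√2)[[1, i], [i, 1]]`. -/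
noncomputable def Vmat : Matrix (Fin 2) (Fin 2) ℂ :=
  ((Real.sqrt 2 : ℂ))⁻¹ • !![1, I; I, 1]

/-- `w(z) = ((z+1)^{1/2}+1)/((z+1)^{1/2}−1)`, principal branch. -/
noncomputable def wFun (z : ℂ) : ℂ :=
  ((z + 1) ^ ((1 : ℂ) / 2) + 1) / ((z + 1) ^ ((1 : ℂ) / 2) - 1)

/-- The global parametrix `P^{(∞)}_α`. -/
noncomputable def Pinf (α : ℝ) (z : ℂ) : Matrix (Fin 2) (Fin 2) ℂ :=
  !![1, 0; 2 * (α : ℂ) * I, 1] *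
  !![(z + 1) ^ (-(1 : ℂ) / 4), 0; 0, (z + 1) ^ ((1 : ℂ) / 4)] *
  Vmat *
  !![wFun z ^ (-(α : ℂ)), 0; 0, wFun z ^ ((α : ℂ))]

/-! ### Auxiliary matrix algebra -/

private lemma h2c : ((Real.sqrt 2 : ℂ))⁻¹ * ((Real.sqrt 2 : ℂ))⁻¹ = 2⁻¹ := by
  rw [← mul_inv, ← Complex.ofReal_mul, Real.mul_self_sqrt (by norm_num)]
  norm_num

private lemma gen_inv (u : ℂ) (hu : u * u = 2⁻¹) :
    (u • !![1, I; I, 1]) * (u • !![(1:ℂ), -I; -I, 1]) = 1 := by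
  have hu2 : u ^ 2 = 2⁻¹ := by rw [sq]; exact hu
  ext i j
  fin_cases i <;> fin_cases j <;>
    simp [Matrix.mul_apply, Fin.sum_univ_two, Matrix.one_apply] <;>
    ring_nf <;> simp only [Complex.I_sq, hu2] <;> ring

private lemma Vinv : Vmat⁻¹ = ((Real.sqrt 2 : ℂ))⁻¹ • !![1, -I; -I, 1] := by
  apply Matrix.inv_eq_right_inv
  exact gen_inv _ h2c

private lemma gen_prod (u m p q a b r r' : ℂ) (hu : u * u = 2⁻¹) :
    !![1, 0; m, 1] * !![p, 0; 0, q] * (u • !![1, I; I, 1]) * !![a, 0; 0, b] *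
        (u • !![(1:ℂ), -I; -I, 1]) * !![r, 0; 0, r'] =
      !![p * r * ((a + b) / 2), p * r' * (I * (b - a) / 2);
         m * (p * r * ((a + b) / 2)) + q * r * (I * (a - b) / 2),
         m * (p * r' * (I * (b - a) / 2)) + q * r' * ((a + b) / 2)] := by
  have hu2 : u ^ 2 = 2⁻¹ := by rw [sq]; exact hu
  ext i j
  fin_cases i <;> fin_cases j <;>
    simp [Matrix.mul_apply, Fin.sum_univ_two] <;>
    ring_nf <;> simp only [Complex.I_sq, hu2] <;> ring

private lemma prod_eq (m p q a b r r' : ℂ) :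
    !![1, 0; m, 1] * !![p, 0; 0, q] * Vmat * !![a, 0; 0, b] * Vmat⁻¹ * !![r, 0; 0, r'] =
      !![p * r * ((a + b) / 2), p * r' * (I * (b - a) / 2);
         m * (p * r * ((a + b) / 2)) + q * r * (I * (a - b) / 2),
         m * (p * r' * (I * (b - a) / 2)) + q * r' * ((a + b) / 2)] := by
  rw [Vinv]
  exact gen_prod _ m p q a b r r' h2c

private lemma tendsto_fin_two {l : Filter ℂ} {f g h k : ℂ → ℂ} {x y x' y' : ℂ}
    (hf : Tendsto f l (𝓝 x)) (hg : Tendsto g l (𝓝 y))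
    (hh : Tendsto h l (𝓝 x')) (hk : Tendsto k l (𝓝 y')) :
    Tendsto (fun z => !![f z, g z; h z, k z]) l (𝓝 !![x, y; x', y']) := by
  refine tendsto_pi_nhds.mpr ?_
  intro i
  refine tendsto_pi_nhds.mpr ?_
  intro j
  fin_cases i <;> fin_cases j <;> simpa

/-! ### The filter and basic asymptotics -/

private noncomputable def Lfil : Filter ℂ :=
  (Filter.comap (fun z : ℂ => ‖z‖) Filter.atTop) ⊓
    Filter.principal {z : ℂ | ¬(z.im = 0 ∧ z.re ≤ 0)}

private lemma habs : Tendsto (fun z : ℂ => ‖z‖) Lfil atTop :=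
  tendsto_comap.mono_left inf_le_left

private lemma hbig (R : ℝ) : ∀ᶠ z in Lfil, R < ‖z‖ :=
  habs.eventually (eventually_gt_atTop R)

private lemma hslit : ∀ᶠ z in Lfil, z ∈ Complex.slitPlane := by
  have h : ∀ᶠ z in Lfil, z ∈ {z : ℂ | ¬(z.im = 0 ∧ z.re ≤ 0)} :=
    (eventually_principal.mpr fun z hz => hz).filter_mono inf_le_right
  filter_upwards [h] with z hz
  rw [Complex.mem_slitPlane_iff]
  by_cases him : z.im = 0
  · exact Or.inl (by push_neg at hz; exact lt_of_not_ge (by simpa [him] using hz him))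
  · exact Or.inr him

private lemma hne0 : ∀ᶠ z in Lfil, z ≠ 0 := by
  filter_upwards [hbig 1] with z hz h0
  rw [h0] at hz
  simp at hz
  linarith

private lemma hne1 : ∀ᶠ z in Lfil, z + 1 ≠ 0 := by
  filter_upwards [hbig 1] with z hz h0
  have : z = -1 := by linear_combination h0
  simp [this] at hz

private lemma hinv0 : Tendsto (fun z : ℂ => z⁻¹) Lfil (𝓝 0) := by
  rw [tendsto_zero_iff_norm_tendsto_zero]
  simpa [norm_inv, Pi.inv_def] using habs.inv_tendsto_atTop

/-- The key cancellation: `(z+1)^c z^d → 1` when `c + d = 0`. -/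
private lemma key (c d : ℂ) (hcd : c + d = 0) :
    Tendsto (fun z : ℂ => (z + 1) ^ c * z ^ d) Lfil (𝓝 1) := by
  have h1 : Tendsto (fun z : ℂ => 1 + z⁻¹) Lfil (𝓝 1) := by
    simpa using tendsto_const_nhds.add hinv0
  have hlog : Tendsto (fun z : ℂ => Complex.log (1 + z⁻¹)) Lfil (𝓝 0) := by
    have hc : ContinuousAt Complex.log 1 :=
      continuousAt_clog (by simp [Complex.mem_slitPlane_iff])
    simpa [Complex.log_one, Function.comp_def] using (hc.tendsto.comp h1)
  have hexp : Tendsto (fun z : ℂ => Complex.exp (Complex.log (1 + z⁻¹) * c)) Lfil (𝓝 1) := by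
    have h0 : Tendsto (fun z : ℂ => Complex.log (1 + z⁻¹) * c) Lfil (𝓝 0) := by
      simpa using hlog.mul_const c
    simpa [Function.comp_def] using (Complex.continuous_exp.tendsto 0).comp h0
  refine hexp.congr' ?_
  filter_upwards [hbig 1, hslit] with z hz hsl
  have hz0 : z ≠ 0 := Complex.slitPlane_ne_zero hsl
  have hz1 : z + 1 ≠ 0 := by
    intro h0
    have : z = -1 := by linear_combination h0
    simp [this] at hz
  have hmul : z * (1 + z⁻¹) = z + 1 := by field_simp
  have h1z : (1 : ℂ) + z⁻¹ ≠ 0 := by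
    intro h0
    apply hz1
    rw [← hmul, h0, mul_zero]
  have hargs : Complex.arg z + Complex.arg (1 + z⁻¹) ∈ Set.Ioc (-Real.pi) Real.pi := by
    have him : (1 + z⁻¹).im = -z.im / Complex.normSq z := by
      simp [Complex.add_im, Complex.inv_im]
    have hnsq : 0 < Complex.normSq z := Complex.normSq_pos.mpr hz0
    rcases lt_trichotomy z.im 0 with hlt | heq | hgt
    · have h1 : Complex.arg z < 0 := Complex.arg_neg_iff.mpr hlt
      have h2 : 0 ≤ (1 + z⁻¹).im := by
        rw [him]
        apply div_nonneg (by linarith) hnsq.le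
      have h3 : 0 ≤ Complex.arg (1 + z⁻¹) := Complex.arg_nonneg_iff.mpr h2
      exact ⟨by linarith [Complex.neg_pi_lt_arg z, h3],
        by linarith [Complex.arg_le_pi (1 + z⁻¹)]⟩
    · have hre : 0 < z.re := by
        rcases Complex.mem_slitPlane_iff.mp hsl with h | h
        · exact h
        · exact absurd heq h
      have h1 : Complex.arg z = 0 := Complex.arg_eq_zero_iff.mpr ⟨hre.le, heq⟩
      have h2 : Complex.arg (1 + z⁻¹) = 0 := by
        apply Complex.arg_eq_zero_iff.mpr
        constructor
        · have : (1 + z⁻¹).re = 1 + z.re / Complex.normSq z := by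
            simp [Complex.add_re, Complex.inv_re]
          rw [this]; positivity
        · rw [him, heq]; simp
      rw [h1, h2]
      exact ⟨by simpa using Real.pi_pos, by simpa using Real.pi_pos.le⟩
    · have h2 : (1 + z⁻¹).im < 0 := by
        rw [him]
        apply div_neg_of_neg_of_pos (by linarith) hnsq
      have h1 : Complex.arg (1 + z⁻¹) < 0 := Complex.arg_neg_iff.mpr h2
      have h3 : 0 ≤ Complex.arg z := Complex.arg_nonneg_iff.mpr hgt.le
      exact ⟨by linarith [Complex.neg_pi_lt_arg (1 + z⁻¹)],
        by linarith [Complex.arg_le_pi z]⟩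
  have hlogadd : Complex.log (z + 1) = Complex.log z + Complex.log (1 + z⁻¹) := by
    rw [← hmul]
    exact Complex.log_mul hz0 h1z hargs
  rw [Complex.cpow_def_of_ne_zero hz1, Complex.cpow_def_of_ne_zero hz0, ← Complex.exp_add]
  congr 1
  rw [hlogadd]
  have hd : d = -c := by linear_combination hcd
  rw [hd]; ring

/-! ### Asymptotics of `wFun` -/

private lemma abs_cpow_real' (x : ℂ) (y : ℝ) (c : ℂ) (h : c = (y : ℂ)) :
    ‖(x ^ c)‖ = ‖x‖ ^ y := by
  rw [h]; exact Complex.norm_cpow_real x y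

private lemma habs1 : Tendsto (fun z : ℂ => ‖(z + 1)‖) Lfil atTop := by
  refine tendsto_atTop_mono' Lfil (f₁ := fun z : ℂ => ‖z‖ - 1) ?_ ?_
  · filter_upwards with z
    have h := norm_add_le (z + 1) (-1)
    simp only [add_neg_cancel_right] at h
    simp at h ⊢
    linarith
  · simpa [sub_eq_add_neg] using tendsto_atTop_add_const_right Lfil (-1) habs

private lemma hs_abs :
    Tendsto (fun z : ℂ => ‖((z + 1) ^ ((1 : ℂ) / 2))‖) Lfil atTop := by
  have heq : (fun z : ℂ => ‖((z + 1) ^ ((1 : ℂ) / 2))‖)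
      = fun z : ℂ => ‖(z + 1)‖ ^ ((1 : ℝ) / 2) := by
    funext z
    exact abs_cpow_real' _ _ _ (by norm_num)
  rw [heq]
  exact (tendsto_rpow_atTop (by norm_num)).comp habs1

private lemma tendsto_inv_zero_of_abs_atTop {f : ℂ → ℂ}
    (h : Tendsto (fun z => ‖(f z)‖) Lfil atTop) :
    Tendsto (fun z => (f z)⁻¹) Lfil (𝓝 0) := by
  rw [tendsto_zero_iff_norm_tendsto_zero]
  simpa [norm_inv, Pi.inv_def] using h.inv_tendsto_atTop

private lemma hs1_inv :
    Tendsto (fun z : ℂ => ((z + 1) ^ ((1 : ℂ) / 2) - 1)⁻¹) Lfil (𝓝 0) := by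
  apply tendsto_inv_zero_of_abs_atTop
  refine tendsto_atTop_mono' Lfil
    (f₁ := fun z : ℂ => ‖((z + 1) ^ ((1 : ℂ) / 2))‖ - 1) ?_ ?_
  · filter_upwards with z
    have h := norm_add_le ((z + 1) ^ ((1 : ℂ) / 2) - 1) 1
    simp only [sub_add_cancel] at h
    simp at h ⊢
    linarith
  · simpa [sub_eq_add_neg] using tendsto_atTop_add_const_right Lfil (-1) hs_abs

private lemma hs_big : ∀ᶠ z in Lfil, 1 < ‖((z + 1) ^ ((1 : ℂ) / 2))‖ :=
  hs_abs.eventually (eventually_gt_atTop 1)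

private lemma hw : Tendsto wFun Lfil (𝓝 1) := by
  have h2 : Tendsto (fun z : ℂ => 1 + 2 * ((z + 1) ^ ((1 : ℂ) / 2) - 1)⁻¹) Lfil (𝓝 1) := by
    simpa using tendsto_const_nhds.add (hs1_inv.const_mul (2:ℂ))
  refine h2.congr' ?_
  filter_upwards [hs_big] with z hz
  have hne : (z + 1) ^ ((1 : ℂ) / 2) - 1 ≠ 0 := by
    intro h0
    have : (z + 1) ^ ((1 : ℂ) / 2) = 1 := by linear_combination h0
    rw [this] at hz; simp at hz
  rw [wFun]
  field_simp
  ring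

private lemma hwne1 (z : ℂ) : wFun z ≠ 1 := by
  rw [wFun]
  by_cases h : (z + 1) ^ ((1 : ℂ) / 2) - 1 = 0
  · rw [h, div_zero]; exact zero_ne_one
  · intro h0
    rw [div_eq_one_iff_eq h] at h0
    have : (1 : ℂ) = -1 := by linear_combination h0
    norm_num at this

private lemma hwc (c : ℂ) : Tendsto (fun z : ℂ => wFun z ^ c) Lfil (𝓝 1) := by
  have hc : ContinuousAt (fun x : ℂ => x ^ c) 1 :=
    continuousAt_cpow_const (by simp [Complex.mem_slitPlane_iff])
  simpa [Complex.one_cpow, Function.comp_def] using hc.tendsto.comp hw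

private lemma hslope (α : ℝ) : Tendsto
    (fun z : ℂ => (wFun z ^ (-(α : ℂ)) - wFun z ^ ((α : ℂ))) / (wFun z - 1))
    Lfil (𝓝 (-2 * α)) := by
  have hderiv : HasDerivAt (fun t : ℂ => t ^ (-(α : ℂ)) - t ^ ((α : ℂ))) (-2 * α) 1 := by
    have hsl : (1 : ℂ) ∈ Complex.slitPlane := by simp [Complex.mem_slitPlane_iff]
    have h1 : HasDerivAt (fun t : ℂ => t ^ (-(α : ℂ))) (-(α : ℂ)) 1 := by
      have := (hasDerivAt_id (1 : ℂ)).cpow_const (c := -(α : ℂ)) (by simpa using hsl)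
      simpa using this
    have h2 : HasDerivAt (fun t : ℂ => t ^ ((α : ℂ))) ((α : ℂ)) 1 := by
      have := (hasDerivAt_id (1 : ℂ)).cpow_const (c := (α : ℂ)) (by simpa using hsl)
      simpa using this
    have := h1.sub h2
    rw [show (-2 * (α : ℂ)) = -(α : ℂ) - (α : ℂ) by ring]
    exact this
  have hsl := hasDerivAt_iff_tendsto_slope.mp hderiv
  have hwt : Tendsto wFun Lfil (𝓝[≠] (1 : ℂ)) := by
    rw [tendsto_nhdsWithin_iff]
    exact ⟨hw, Eventually.of_forall fun z => hwne1 z⟩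
  have hcomp := hsl.comp hwt
  refine hcomp.congr ?_
  intro z
  simp only [Function.comp_apply, slope_def_field]
  rw [Complex.one_cpow, Complex.one_cpow]
  ring

private lemma hzw : Tendsto (fun z : ℂ => z ^ ((1 : ℂ) / 2) * (wFun z - 1)) Lfil (𝓝 2) := by
  have hkey : Tendsto (fun z : ℂ => (z + 1) ^ (-((1 : ℂ) / 2)) * z ^ ((1 : ℂ) / 2))
      Lfil (𝓝 1) := key _ _ (by ring)
  have hfrac : Tendsto (fun z : ℂ => 1 + ((z + 1) ^ ((1 : ℂ) / 2) - 1)⁻¹) Lfil (𝓝 1) := by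
    simpa using tendsto_const_nhds.add hs1_inv
  have hmain : Tendsto (fun z : ℂ =>
      ((z + 1) ^ (-((1 : ℂ) / 2)) * z ^ ((1 : ℂ) / 2)) *
        (1 + ((z + 1) ^ ((1 : ℂ) / 2) - 1)⁻¹) * 2) Lfil (𝓝 2) := by
    have := (hkey.mul hfrac).mul_const (2 : ℂ)
    simpa using this
  refine hmain.congr' ?_
  filter_upwards [hne1, hs_big] with z hz1 hsb
  have hs0 : (z + 1) ^ ((1 : ℂ) / 2) ≠ 0 := by
    simp [Complex.cpow_eq_zero_iff, hz1]
  have hsm1 : (z + 1) ^ ((1 : ℂ) / 2) - 1 ≠ 0 := by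
    intro h0
    have : (z + 1) ^ ((1 : ℂ) / 2) = 1 := by linear_combination h0
    rw [this] at hsb; simp at hsb
  have hneg : (z + 1) ^ (-((1 : ℂ) / 2)) = ((z + 1) ^ ((1 : ℂ) / 2))⁻¹ :=
    Complex.cpow_neg _ _
  have hwm1 : wFun z - 1 = 2 * ((z + 1) ^ ((1 : ℂ) / 2) - 1)⁻¹ := by
    rw [wFun]
    field_simp
    ring
  rw [hneg, hwm1]
  field_simp
  ring

private lemma hzab (α : ℝ) : Tendsto
    (fun z : ℂ => z ^ ((1 : ℂ) / 2) * (wFun z ^ (-(α : ℂ)) - wFun z ^ ((α : ℂ))))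
    Lfil (𝓝 (-4 * α)) := by
  have h := (hslope α).mul hzw
  have hval : (-2 * (α : ℂ)) * 2 = -4 * α := by ring
  rw [hval] at h
  refine h.congr ?_
  intro z
  have hne : wFun z - 1 ≠ 0 := sub_ne_zero.mpr (hwne1 z)
  field_simp

private lemma P0 : Tendsto (fun z : ℂ => (z + 1) ^ (-(1 : ℂ) / 4) * z ^ (-(1 : ℂ) / 4))
    Lfil (𝓝 0) := by
  rw [tendsto_zero_iff_norm_tendsto_zero]
  have heq : (fun z : ℂ => ‖(z + 1) ^ (-(1 : ℂ) / 4) * z ^ (-(1 : ℂ) / 4)‖)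
      = fun z : ℂ => ‖(z + 1)‖ ^ (-(1 / 4 : ℝ)) * ‖z‖ ^ (-(1 / 4 : ℝ)) := by
    funext z
    rw [norm_mul,
      abs_cpow_real' _ (-(1/4 : ℝ)) _ (by norm_num),
      abs_cpow_real' _ (-(1/4 : ℝ)) _ (by norm_num)]
  rw [heq]
  have h1 := (tendsto_rpow_neg_atTop (by norm_num : (0:ℝ) < 1/4)).comp habs1
  have h2 := (tendsto_rpow_neg_atTop (by norm_num : (0:ℝ) < 1/4)).comp habs
  simpa using h1.mul h2

/-- `P^{(∞)}_α(z) · V⁻¹ · diag(z^{1/4}, z^{−1/4}) → I` as `|z| → ∞` with `z ∉ (−∞, 0]`. -/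
theorem stmt10 (α : ℝ) (hα : -1 / 2 < α) :
    Tendsto
      (fun z : ℂ => Pinf α z * Vmat⁻¹ * !![z ^ ((1 : ℂ) / 4), 0; 0, z ^ (-(1 : ℂ) / 4)])
      ((Filter.comap (fun z : ℂ => ‖z‖) Filter.atTop) ⊓
        Filter.principal {z : ℂ | ¬(z.im = 0 ∧ z.re ≤ 0)})
      (𝓝 (1 : Matrix (Fin 2) (Fin 2) ℂ)) := by
  show Tendsto _ Lfil _
  have hfun : (fun z : ℂ => Pinf α z * Vmat⁻¹ * !![z ^ ((1 : ℂ) / 4), 0; 0, z ^ (-(1 : ℂ) / 4)])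
      = fun z : ℂ =>
        !![(z + 1) ^ (-(1 : ℂ) / 4) * z ^ ((1 : ℂ) / 4) *
              ((wFun z ^ (-(α : ℂ)) + wFun z ^ ((α : ℂ))) / 2),
           (z + 1) ^ (-(1 : ℂ) / 4) * z ^ (-(1 : ℂ) / 4) *
              (I * (wFun z ^ ((α : ℂ)) - wFun z ^ (-(α : ℂ))) / 2);
           2 * (α : ℂ) * I * ((z + 1) ^ (-(1 : ℂ) / 4) * z ^ ((1 : ℂ) / 4) *
              ((wFun z ^ (-(α : ℂ)) + wFun z ^ ((α : ℂ))) / 2)) +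
             (z + 1) ^ ((1 : ℂ) / 4) * z ^ ((1 : ℂ) / 4) *
              (I * (wFun z ^ (-(α : ℂ)) - wFun z ^ ((α : ℂ))) / 2),
           2 * (α : ℂ) * I * ((z + 1) ^ (-(1 : ℂ) / 4) * z ^ (-(1 : ℂ) / 4) *
              (I * (wFun z ^ ((α : ℂ)) - wFun z ^ (-(α : ℂ))) / 2)) +
             (z + 1) ^ ((1 : ℂ) / 4) * z ^ (-(1 : ℂ) / 4) *
              ((wFun z ^ (-(α : ℂ)) + wFun z ^ ((α : ℂ))) / 2)] := by
    funext z
    rw [Pinf]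
    exact prod_eq (2 * (α : ℂ) * I) ((z + 1) ^ (-(1 : ℂ) / 4)) ((z + 1) ^ ((1 : ℂ) / 4))
      (wFun z ^ (-(α : ℂ))) (wFun z ^ ((α : ℂ))) (z ^ ((1 : ℂ) / 4)) (z ^ (-(1 : ℂ) / 4))
  rw [hfun, Matrix.one_fin_two]
  -- limits of the four entries
  have Tab : Tendsto (fun z : ℂ => (wFun z ^ (-(α : ℂ)) + wFun z ^ ((α : ℂ))) / 2)
      Lfil (𝓝 1) := by
    have := ((hwc (-(α : ℂ))).add (hwc ((α : ℂ)))).div_const (2 : ℂ)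
    norm_num at this
    exact this
  have Tba : Tendsto (fun z : ℂ => I * (wFun z ^ ((α : ℂ)) - wFun z ^ (-(α : ℂ))) / 2)
      Lfil (𝓝 0) := by
    have := (((hwc ((α : ℂ))).sub (hwc (-(α : ℂ)))).const_mul I).div_const (2 : ℂ)
    simpa using this
  have T1 : Tendsto (fun z : ℂ => (z + 1) ^ (-(1 : ℂ) / 4) * z ^ ((1 : ℂ) / 4))
      Lfil (𝓝 1) := key _ _ (by ring)
  have T2 : Tendsto (fun z : ℂ => (z + 1) ^ ((1 : ℂ) / 4) * z ^ (-(1 : ℂ) / 4))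
      Lfil (𝓝 1) := key _ _ (by ring)
  have G11 : Tendsto (fun z : ℂ => (z + 1) ^ (-(1 : ℂ) / 4) * z ^ ((1 : ℂ) / 4) *
      ((wFun z ^ (-(α : ℂ)) + wFun z ^ ((α : ℂ))) / 2)) Lfil (𝓝 1) := by
    simpa using T1.mul Tab
  have G12 : Tendsto (fun z : ℂ => (z + 1) ^ (-(1 : ℂ) / 4) * z ^ (-(1 : ℂ) / 4) *
      (I * (wFun z ^ ((α : ℂ)) - wFun z ^ (-(α : ℂ))) / 2)) Lfil (𝓝 0) := by
    simpa using P0.mul Tba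
  have G21b : Tendsto (fun z : ℂ => (z + 1) ^ ((1 : ℂ) / 4) * z ^ ((1 : ℂ) / 4) *
      (I * (wFun z ^ (-(α : ℂ)) - wFun z ^ ((α : ℂ))) / 2)) Lfil (𝓝 (1 * (-4 * α) * (I / 2))) := by
    have hbase := (T2.mul (hzab α)).mul_const (I / 2)
    refine hbase.congr' ?_
    filter_upwards [hne0] with z hz
    have hsplit : z ^ ((1 : ℂ) / 4) = z ^ (-(1 : ℂ) / 4) * z ^ ((1 : ℂ) / 2) := by
      rw [← Complex.cpow_add _ _ hz]
      norm_num
    rw [hsplit]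
    ring
  have G21 : Tendsto (fun z : ℂ =>
      2 * (α : ℂ) * I * ((z + 1) ^ (-(1 : ℂ) / 4) * z ^ ((1 : ℂ) / 4) *
        ((wFun z ^ (-(α : ℂ)) + wFun z ^ ((α : ℂ))) / 2)) +
      (z + 1) ^ ((1 : ℂ) / 4) * z ^ ((1 : ℂ) / 4) *
        (I * (wFun z ^ (-(α : ℂ)) - wFun z ^ ((α : ℂ))) / 2)) Lfil (𝓝 0) := by
    have hsum := (G11.const_mul (2 * (α : ℂ) * I)).add G21b
    have hval : 2 * (α : ℂ) * I * 1 + 1 * (-4 * α) * (I / 2) = 0 := by ring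
    rwa [hval] at hsum
  have G22 : Tendsto (fun z : ℂ =>
      2 * (α : ℂ) * I * ((z + 1) ^ (-(1 : ℂ) / 4) * z ^ (-(1 : ℂ) / 4) *
        (I * (wFun z ^ ((α : ℂ)) - wFun z ^ (-(α : ℂ))) / 2)) +
      (z + 1) ^ ((1 : ℂ) / 4) * z ^ (-(1 : ℂ) / 4) *
        ((wFun z ^ (-(α : ℂ)) + wFun z ^ ((α : ℂ))) / 2)) Lfil (𝓝 1) := by
    have hsum := (G12.const_mul (2 * (α : ℂ) * I)).add (T2.mul Tab)
    have hval : 2 * (α : ℂ) * I * 0 + 1 * 1 = 1 := by ring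
    rwa [hval] at hsum
  exact tendsto_fin_two G11 G12 G21 G22
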